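/- Let S be a semigroup, b,c,b₁,c₁ ∈ S¹, ρ a congruence on S. If bρ and b₁ρ are L-related and cρ and c₁ρ are R-related in (S/ρ)¹, then ρ_{b,c} = ρ_{b₁,c₁}. -/

import Mathlib

/-- Any product `x * ↑s * y` in `S¹ = WithOne S` with middle factor in `S` lies in `S`. -/
theorem exists_coe_eq {S : Type*} [Semigroup S] (x y : WithOne S) (s : S) :
    ∃ z : S, (z : WithOne S) = x * ↑s * y := by
  induction x using WithOne.recOneCoe with
  | one => induction y using WithOne.recOneCoe with
    | one => exact ⟨s, by simp⟩
    | coe b => exact ⟨s * b, by simp⟩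
  | coe a => induction y using WithOne.recOneCoe with
    | one => exact ⟨a * s, by simp⟩
    | coe b => exact ⟨a * s * b, by simp [mul_assoc]⟩

/-- The element `x s y ∈ S` for `x, y ∈ S¹`, `s ∈ S`. -/
noncomputable def sand3 {S : Type*} [Semigroup S] (x : WithOne S) (s : S) (y : WithOne S) : S :=
  (exists_coe_eq x y s).choose

theorem sand3_spec {S : Type*} [Semigroup S] (x : WithOne S) (s : S) (y : WithOne S) :
    (↑(sand3 x s y) : WithOne S) = x * ↑s * y :=
  (exists_coe_eq x y s).choose_spec

/-- `sand b c s = b s c ∈ S` for `b, c ∈ S¹`, `s ∈ S`. -/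
noncomputable def sand {S : Type*} [Semigroup S] (b c : WithOne S) (s : S) : S := sand3 b s c

/-- The relation induced by `ρ` on `S¹ = WithOne S` (classes of the quotient `(S/ρ)¹`
coincide iff this relation holds). -/
def rhoOne {S : Type*} [Semigroup S] (ρ : S → S → Prop) :
    WithOne S → WithOne S → Prop := fun x y =>
  (x = 1 ∧ y = 1) ∨ ∃ s t : S, x = ↑s ∧ y = ↑t ∧ ρ s t

section Aux
variable {S : Type*} [Semigroup S] {ρ : S → S → Prop}

lemma rhoOne_refl (h : Equivalence ρ) (x : WithOne S) : rhoOne ρ x x := by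
  induction x using WithOne.recOneCoe with
  | one => exact Or.inl ⟨rfl, rfl⟩
  | coe a => exact Or.inr ⟨a, a, rfl, rfl, h.refl a⟩

lemma rhoOne_symm (h : Equivalence ρ) {x y : WithOne S} (hxy : rhoOne ρ x y) :
    rhoOne ρ y x := by
  rcases hxy with ⟨h1, h2⟩ | ⟨s, t, hs, ht, hst⟩
  · exact Or.inl ⟨h2, h1⟩
  · exact Or.inr ⟨t, s, ht, hs, h.symm hst⟩

lemma rhoOne_trans (h : Equivalence ρ) {x y z : WithOne S} (hxy : rhoOne ρ x y)
    (hyz : rhoOne ρ y z) : rhoOne ρ x z := by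
  rcases hxy with ⟨h1, h2⟩ | ⟨s, t, hs, ht, hst⟩
  · rcases hyz with ⟨h3, h4⟩ | ⟨s, t, hs, ht, _⟩
    · exact Or.inl ⟨h1, h4⟩
    · subst h2; exact absurd hs.symm (by simp)
  · rcases hyz with ⟨h3, h4⟩ | ⟨s', t', hs', ht', hst'⟩
    · subst h3; exact absurd ht (by simp)
    · have hts : t = s' := by rw [ht] at hs'; exact_mod_cast hs'
      exact Or.inr ⟨s, t', hs, ht', h.trans hst (hts ▸ hst')⟩

lemma rhoOne_mul (h : Equivalence ρ)
    (hcomp : ∀ s t u v : S, ρ s t → ρ u v → ρ (s * u) (t * v))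
    {x x' y y' : WithOne S} (h1 : rhoOne ρ x x') (h2 : rhoOne ρ y y') :
    rhoOne ρ (x * y) (x' * y') := by
  rcases h1 with ⟨hx, hx'⟩ | ⟨s, t, hs, ht, hst⟩ <;>
    rcases h2 with ⟨hy, hy'⟩ | ⟨u, v, hu, hv, huv⟩ <;> subst_vars
  · exact Or.inl ⟨by simp, by simp⟩
  · exact Or.inr ⟨u, v, by simp, by simp, huv⟩
  · exact Or.inr ⟨s, t, by simp, by simp, hst⟩
  · exact Or.inr ⟨s * u, t * v, by simp, by simp, hcomp _ _ _ _ hst huv⟩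

lemma rhoOne_coe_iff {a b : S} : rhoOne ρ ↑a ↑b ↔ ρ a b := by
  constructor
  · rintro (⟨h1, h2⟩ | ⟨s, t, hs, ht, hst⟩)
    · exact absurd h1 (by simp)
    · have : a = s := by exact_mod_cast hs
      have : b = t := by exact_mod_cast ht
      subst_vars; exact hst
  · intro h; exact Or.inr ⟨a, b, rfl, rfl, h⟩

lemma key_dir (h : Equivalence ρ)
    (hcomp : ∀ s t u v : S, ρ s t → ρ u v → ρ (s * u) (t * v))
    {B C B₁ C₁ v u : WithOne S} (hb : rhoOne ρ (v * B) B₁) (hc : rhoOne ρ (C * u) C₁)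
    {s t : S} (hst : ρ (sand B C s) (sand B C t)) : ρ (sand B₁ C₁ s) (sand B₁ C₁ t) := by
  have H : rhoOne ρ (B * ↑s * C) (B * ↑t * C) := by
    rw [← sand3_spec, ← sand3_spec]; exact Or.inr ⟨_, _, rfl, rfl, hst⟩
  have H2 : rhoOne ρ (v * (B * ↑s * C) * u) (v * (B * ↑t * C) * u) :=
    rhoOne_mul h hcomp (rhoOne_mul h hcomp (rhoOne_refl h v) H) (rhoOne_refl h u)
  have e : ∀ w : S, v * (B * ↑w * C) * u = (v * B) * ↑w * (C * u) := by
    intro w; simp only [mul_assoc]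
  rw [e, e] at H2
  have Hb1 : rhoOne ρ (B₁ * ↑s * C₁) (B₁ * ↑t * C₁) := by
    refine rhoOne_trans h (rhoOne_trans h ?_ H2) ?_
    · exact rhoOne_symm h (rhoOne_mul h hcomp (rhoOne_mul h hcomp hb
        (rhoOne_refl h (↑s : WithOne S))) hc)
    · exact rhoOne_mul h hcomp (rhoOne_mul h hcomp hb (rhoOne_refl h (↑t : WithOne S))) hc
  rw [← sand3_spec, ← sand3_spec] at Hb1
  exact rhoOne_coe_iff.mp Hb1

end Aux

/-- If `bρ` and `b₁ρ` are `L`-related and `cρ`, `c₁ρ` are `R`-related in `(S/ρ)¹`, then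
`ρ_{b,c} = ρ_{b₁,c₁}`. -/
theorem rho_bc_eq_of_green {S : Type*} [Semigroup S]
    (b c b₁ c₁ : WithOne S) (ρ : S → S → Prop) (hequiv : Equivalence ρ)
    (hcomp : ∀ s t u v : S, ρ s t → ρ u v → ρ (s * u) (t * v))
    (hL : (∃ u : WithOne S, rhoOne ρ (u * b₁) b) ∧ (∃ v : WithOne S, rhoOne ρ (v * b) b₁))
    (hR : (∃ u : WithOne S, rhoOne ρ (c * u) c₁) ∧ (∃ v : WithOne S, rhoOne ρ (c₁ * v) c)) :
    ∀ s t : S, ρ (sand b c s) (sand b c t) ↔ ρ (sand b₁ c₁ s) (sand b₁ c₁ t) := by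
  obtain ⟨⟨u, hu⟩, ⟨v, hv⟩⟩ := hL
  obtain ⟨⟨u', hu'⟩, ⟨v', hv'⟩⟩ := hR
  intro s t
  exact ⟨fun hst => key_dir hequiv hcomp hv hu' hst,
    fun hst => key_dir hequiv hcomp hu hv' hst⟩
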